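/- arXiv:2402.04144 — 2 statements merged into one kernel-verified Lean document; each statement's English description precedes it below -/
import Mathlib

section
/- Two n-tuples x, y ∈ (P^1)^n, each having at least three pairwise distinct entries and having all equal cross-ratios (i.e., cr(x_i,x_j,x_k,x_l) = cr(y_i,y_j,y_k,y_l) for every quadruple of indices where both sides are defined), are PGL_2-equivalent if and only if their incidence partitions coincide, where the incidence partition groups indices with equal entries. -/
open Matrix

/-- The Möbius action of `GL₂(K)` on `ℙ¹(K)`. -/
noncomputable def mobiusAct {K : Type*} [Field K] (g : GL (Fin 2) K) :
    Projectivization K (Fin 2 → K) → Projectivization K (Fin 2 → K) :=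
  Projectivization.map (Matrix.toLin' (g : Matrix (Fin 2) (Fin 2) K))
    (by
      have h : Function.Injective ((g : Matrix (Fin 2) (Fin 2) K).mulVec) :=
        Matrix.mulVec_injective_iff_isUnit.2 g.isUnit
      intro u v huv
      apply h
      simpa [Matrix.toLin'_apply] using huv)

/-- The determinant of chosen representatives of two points of `ℙ¹(K)`;
its vanishing expresses equality of the two points, and products of such
determinants express (denominator-cleared) cross-ratio identities. -/
noncomputable def detRep {K : Type*} [Field K]
    (p q : Projectivization K (Fin 2 → K)) : K :=
  p.rep 0 * q.rep 1 - p.rep 1 * q.rep 0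

namespace CRAux

open Projectivization

variable {K : Type*} [Field K]

/-- determinant of two vectors in `K²` -/
def d2 (u v : Fin 2 → K) : K := u 0 * v 1 - u 1 * v 0

lemma detRep_def (p q : Projectivization K (Fin 2 → K)) :
    detRep p q = d2 p.rep q.rep := rfl

lemma vec_ne_zero_iff (u : Fin 2 → K) : u ≠ 0 ↔ u 0 ≠ 0 ∨ u 1 ≠ 0 := by
  constructor
  · intro h
    by_contra hc
    push_neg at hc
    exact h (funext fun i => by fin_cases i <;> simp [hc.1, hc.2])
  · rintro (h | h) h0 <;> simp [h0] at h

lemma exists_smul_of_d2_eq_zero {u v : Fin 2 → K} (hu : u ≠ 0) (hv : v ≠ 0)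
    (h : d2 u v = 0) : ∃ a : K, a • u = v := by
  rw [vec_ne_zero_iff] at hu
  have h' : u 0 * v 1 = u 1 * v 0 := by rwa [d2, sub_eq_zero] at h
  rcases hu with h0 | h1
  · refine ⟨v 0 / u 0, funext fun i => ?_⟩
    fin_cases i <;> simp only [Pi.smul_apply, smul_eq_mul, Fin.zero_eta, Fin.mk_one]
    · field_simp
    · field_simp
      linear_combination -h'
  · refine ⟨v 1 / u 1, funext fun i => ?_⟩
    fin_cases i <;> simp only [Pi.smul_apply, smul_eq_mul, Fin.zero_eta, Fin.mk_one]
    · field_simp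
      linear_combination h'
    · field_simp

lemma mk_eq_of_eq {u v : Fin 2 → K} (h : u = v) (hu : u ≠ 0) (hv : v ≠ 0) :
    Projectivization.mk K u hu = Projectivization.mk K v hv := by subst h; rfl

lemma detRep_eq_zero_iff (p q : Projectivization K (Fin 2 → K)) :
    detRep p q = 0 ↔ p = q := by
  constructor
  · intro h
    rw [detRep_def] at h
    obtain ⟨a, ha⟩ := exists_smul_of_d2_eq_zero p.rep_nonzero q.rep_nonzero h
    have : Projectivization.mk K q.rep q.rep_nonzero = Projectivization.mk K p.rep p.rep_nonzero := by
      rw [Projectivization.mk_eq_mk_iff']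
      exact ⟨a, ha⟩
    rw [Projectivization.mk_rep, Projectivization.mk_rep] at this
    exact this.symm
  · rintro rfl
    rw [detRep_def, d2]; ring

lemma detRep_ne_zero_iff (p q : Projectivization K (Fin 2 → K)) :
    detRep p q ≠ 0 ↔ p ≠ q := (detRep_eq_zero_iff p q).not

/-- Plücker relation -/
lemma pluecker (u v w z : Fin 2 → K) :
    d2 u w * d2 v z - d2 v w * d2 u z = d2 u v * d2 w z := by
  simp only [d2]; ring

/-- a point of ℙ¹ is determined by its "cross-ratio coordinate" w.r.t. two distinct points -/
lemma eq_of_detRep_rel {a b p q : Projectivization K (Fin 2 → K)} (hab : a ≠ b)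
    (h : detRep a p * detRep b q = detRep b p * detRep a q) : p = q := by
  have hP := pluecker a.rep b.rep p.rep q.rep
  rw [← detRep_def, ← detRep_def, ← detRep_def, ← detRep_def, ← detRep_def, ← detRep_def] at hP
  rw [← detRep_eq_zero_iff]
  have hab' : detRep a b ≠ 0 := (detRep_ne_zero_iff a b).2 hab
  have hz : detRep a b * detRep p q = 0 := by linear_combination h - hP
  exact (mul_eq_zero.1 hz).resolve_left hab'

lemma mulVec_ne_zero (g : GL (Fin 2) K) {v : Fin 2 → K} (hv : v ≠ 0) :
    (g : Matrix (Fin 2) (Fin 2) K).mulVec v ≠ 0 := by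
  have h : Function.Injective ((g : Matrix (Fin 2) (Fin 2) K).mulVec) :=
    Matrix.mulVec_injective_iff_isUnit.2 g.isUnit
  intro h0
  exact hv (h (by simpa using h0))

lemma mobiusAct_mk (g : GL (Fin 2) K) (v : Fin 2 → K) (hv : v ≠ 0) :
    mobiusAct g (Projectivization.mk K v hv) =
      Projectivization.mk K ((g : Matrix (Fin 2) (Fin 2) K).mulVec v) (mulVec_ne_zero g hv) := by
  refine (Projectivization.map_mk (Matrix.toLin' (g : Matrix (Fin 2) (Fin 2) K)) _ v hv).trans ?_
  exact mk_eq_of_eq (Matrix.toLin'_apply _ _) _ _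

lemma mobiusAct_mul (g h : GL (Fin 2) K) (p : Projectivization K (Fin 2 → K)) :
    mobiusAct (g * h) p = mobiusAct g (mobiusAct h p) := by
  induction p using Projectivization.ind with
  | h v hv =>
    rw [mobiusAct_mk, mobiusAct_mk, mobiusAct_mk]
    exact mk_eq_of_eq (by rw [Matrix.mulVec_mulVec, Units.val_mul]) _ _

lemma mobiusAct_inv_act (g : GL (Fin 2) K) (p : Projectivization K (Fin 2 → K)) :
    mobiusAct g⁻¹ (mobiusAct g p) = p := by
  induction p using Projectivization.ind with
  | h v hv =>
    rw [mobiusAct_mk, mobiusAct_mk]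
    refine mk_eq_of_eq ?_ _ _
    rw [Matrix.mulVec_mulVec, ← Units.val_mul, inv_mul_cancel]
    simp

lemma mobiusAct_injective (g : GL (Fin 2) K) : Function.Injective (mobiusAct g) := by
  intro p q h
  have h2 := congrArg (mobiusAct g⁻¹) h
  rwa [mobiusAct_inv_act, mobiusAct_inv_act] at h2

lemma d2_mulVec (A : Matrix (Fin 2) (Fin 2) K) (u v : Fin 2 → K) :
    d2 (A.mulVec u) (A.mulVec v) = A.det * d2 u v := by
  simp only [d2, Matrix.mulVec, dotProduct, Fin.sum_univ_two, Matrix.det_fin_two]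
  ring

lemma d2_smul_left (a : K) (u v : Fin 2 → K) : d2 (a • u) v = a * d2 u v := by
  simp only [d2, Pi.smul_apply, smul_eq_mul]; ring

lemma d2_smul_right (a : K) (u v : Fin 2 → K) : d2 u (a • v) = a * d2 u v := by
  simp only [d2, Pi.smul_apply, smul_eq_mul]; ring

/-- transformation law for `detRep` with per-point scalars -/
lemma exists_scalars (g : GL (Fin 2) K) :
    ∃ c : Projectivization K (Fin 2 → K) → K, (∀ p, c p ≠ 0) ∧
      ∀ p q, detRep (mobiusAct g p) (mobiusAct g q) =
        c p * c q * (g : Matrix (Fin 2) (Fin 2) K).det * detRep p q := by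
  have key : ∀ p : Projectivization K (Fin 2 → K), ∃ a : K, a ≠ 0 ∧
      (mobiusAct g p).rep = a • (g : Matrix (Fin 2) (Fin 2) K).mulVec p.rep := by
    intro p
    have h1 : mobiusAct g p =
        Projectivization.mk K ((g : Matrix (Fin 2) (Fin 2) K).mulVec p.rep)
          (mulVec_ne_zero g p.rep_nonzero) := by
      conv_lhs => rw [← p.mk_rep]
      exact mobiusAct_mk g _ _
    obtain ⟨a, ha⟩ := Projectivization.exists_smul_eq_mk_rep K _ (mulVec_ne_zero g p.rep_nonzero)
    refine ⟨(a : K), a.ne_zero, ?_⟩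
    rw [h1, ← ha, Units.smul_def]
  choose c hc0 hcs using key
  refine ⟨c, hc0, fun p q => ?_⟩
  rw [detRep_def, hcs p, hcs q, d2_smul_left, d2_smul_right, d2_mulVec, detRep_def]
  ring

lemma mk_smul_rep {a : K} (ha : a ≠ 0) (p : Projectivization K (Fin 2 → K))
    (h : a • p.rep ≠ 0) : Projectivization.mk K (a • p.rep) h = p := by
  conv_rhs => rw [← p.mk_rep]
  rw [Projectivization.mk_eq_mk_iff']
  exact ⟨a, rfl⟩

/-- three-point transitivity -/
lemma exists_transitive (p q r : Projectivization K (Fin 2 → K))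
    (hpq : p ≠ q) (hpr : p ≠ r) (hqr : q ≠ r) :
    ∃ g : GL (Fin 2) K,
      mobiusAct g (Projectivization.mk K ![1, 0] (by simp [vec_ne_zero_iff])) = p ∧
      mobiusAct g (Projectivization.mk K ![0, 1] (by simp [vec_ne_zero_iff])) = q ∧
      mobiusAct g (Projectivization.mk K ![1, 1] (by simp [vec_ne_zero_iff])) = r := by
  set u := p.rep with hu
  set v := q.rep with hv
  set w := r.rep with hw
  have hd : d2 u v ≠ 0 := (detRep_ne_zero_iff p q).2 hpq
  have ha0 : d2 w v ≠ 0 := (detRep_ne_zero_iff r q).2 (Ne.symm hqr)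
  have hb0 : d2 u w ≠ 0 := (detRep_ne_zero_iff p r).2 hpr
  set a : K := d2 w v with ha
  set b : K := d2 u w with hb
  have hsum : a • u + b • v = d2 u v • w := by
    funext i
    fin_cases i <;>
      (simp only [Pi.add_apply, Pi.smul_apply, smul_eq_mul, ha, hb, d2, Fin.zero_eta, Fin.mk_one]; ring)
  set M : Matrix (Fin 2) (Fin 2) K := !![a * u 0, b * v 0; a * u 1, b * v 1] with hM
  have hdet : M.det ≠ 0 := by
    have hMd : M.det = a * b * d2 u v := by
      rw [hM, Matrix.det_fin_two_of, d2]; ring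
    rw [hMd]
    exact mul_ne_zero (mul_ne_zero ha0 hb0) hd
  set g := Matrix.GeneralLinearGroup.mkOfDetNeZero M hdet with hg
  have hgM : (g : Matrix (Fin 2) (Fin 2) K) = M := rfl
  have h1 : (g : Matrix (Fin 2) (Fin 2) K).mulVec ![1, 0] = a • u := by
    funext i
    fin_cases i <;>
      simp [hgM, hM, Matrix.mulVec, dotProduct, Fin.sum_univ_two]
  have h2 : (g : Matrix (Fin 2) (Fin 2) K).mulVec ![0, 1] = b • v := by
    funext i
    fin_cases i <;>
      simp [hgM, hM, Matrix.mulVec, dotProduct, Fin.sum_univ_two]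
  have h3 : (g : Matrix (Fin 2) (Fin 2) K).mulVec ![1, 1] = a • u + b • v := by
    funext i
    fin_cases i <;>
      simp [hgM, hM, Matrix.mulVec, dotProduct, Fin.sum_univ_two]
  refine ⟨g, ?_, ?_, ?_⟩
  · rw [mobiusAct_mk]
    calc Projectivization.mk K _ (mulVec_ne_zero g (by simp [vec_ne_zero_iff]))
        = Projectivization.mk K (a • u) (smul_ne_zero ha0 p.rep_nonzero) :=
          mk_eq_of_eq h1 _ _
      _ = p := mk_smul_rep ha0 p _
  · rw [mobiusAct_mk]
    calc Projectivization.mk K _ (mulVec_ne_zero g (by simp [vec_ne_zero_iff]))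
        = Projectivization.mk K (b • v) (smul_ne_zero hb0 q.rep_nonzero) :=
          mk_eq_of_eq h2 _ _
      _ = q := mk_smul_rep hb0 q _
  · rw [mobiusAct_mk]
    calc Projectivization.mk K _ (mulVec_ne_zero g (by simp [vec_ne_zero_iff]))
        = Projectivization.mk K (d2 u v • w) (smul_ne_zero hd r.rep_nonzero) :=
          mk_eq_of_eq (h3.trans hsum) _ _
      _ = r := mk_smul_rep hd r _

/-- three-point transitivity, general form -/
lemma exists_transitive' (p q r p' q' r' : Projectivization K (Fin 2 → K))
    (hpq : p ≠ q) (hpr : p ≠ r) (hqr : q ≠ r)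
    (hpq' : p' ≠ q') (hpr' : p' ≠ r') (hqr' : q' ≠ r') :
    ∃ g : GL (Fin 2) K,
      mobiusAct g p = p' ∧ mobiusAct g q = q' ∧ mobiusAct g r = r' := by
  obtain ⟨g1, hg1a, hg1b, hg1c⟩ := exists_transitive p q r hpq hpr hqr
  obtain ⟨g2, hg2a, hg2b, hg2c⟩ := exists_transitive p' q' r' hpq' hpr' hqr'
  refine ⟨g2 * g1⁻¹, ?_, ?_, ?_⟩
  · rw [mobiusAct_mul, ← hg1a, mobiusAct_inv_act, hg2a]
  · rw [mobiusAct_mul, ← hg1b, mobiusAct_inv_act, hg2b]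
  · rw [mobiusAct_mul, ← hg1c, mobiusAct_inv_act, hg2c]

end CRAux

open CRAux in
/-- Two `n`-tuples of points of `ℙ¹`, each with at least three pairwise distinct
entries, whose cross-ratios agree for every quadruple of indices (expressed by the
denominator-cleared determinant identities), are `PGL₂`-equivalent if and only if
their incidence partitions coincide (i.e., entries of `x` coincide exactly when the
corresponding entries of `y` do). -/
theorem equivalent_iff_same_incidence_partition {K : Type*} [Field K] (n : ℕ)
    (x y : Fin n → Projectivization K (Fin 2 → K))
    (hx3 : ∃ i j k : Fin n, x i ≠ x j ∧ x i ≠ x k ∧ x j ≠ x k)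
    (hy3 : ∃ i j k : Fin n, y i ≠ y j ∧ y i ≠ y k ∧ y j ≠ y k)
    (hcr : ∀ i j k l : Fin n,
      detRep (x i) (x k) * detRep (x j) (x l) *
        (detRep (y i) (y l) * detRep (y j) (y k)) =
      detRep (x i) (x l) * detRep (x j) (x k) *
        (detRep (y i) (y k) * detRep (y j) (y l))) :
    (∃ g : GL (Fin 2) K, ∀ i, mobiusAct g (x i) = y i) ↔
      (∀ i j, x i = x j ↔ y i = y j) := by
  constructor
  · rintro ⟨g, hg⟩ i j
    constructor
    · intro h
      rw [← hg i, ← hg j, h]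
    · intro h
      exact mobiusAct_injective g (by rw [hg i, hg j, h])
  · intro hinc
    obtain ⟨i, j, k, hij, hik, hjk⟩ := hx3
    have hij' : y i ≠ y j := fun h => hij ((hinc i j).2 h)
    have hik' : y i ≠ y k := fun h => hik ((hinc i k).2 h)
    have hjk' : y j ≠ y k := fun h => hjk ((hinc j k).2 h)
    obtain ⟨g, hgi, hgj, hgk⟩ :=
      exists_transitive' (x i) (x j) (x k) (y i) (y j) (y k) hij hik hjk hij' hik' hjk'
    refine ⟨g, fun l => ?_⟩
    by_cases hli : x l = x i
    · rw [hli, hgi, (hinc l i).1 hli]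
    by_cases hlj : x l = x j
    · rw [hlj, hgj, (hinc l j).1 hlj]
    by_cases hlk : x l = x k
    · rw [hlk, hgk, (hinc l k).1 hlk]
    -- generic case
    obtain ⟨c, hc0, hcs⟩ := exists_scalars g
    set δ : K := (g : Matrix (Fin 2) (Fin 2) K).det with hδ
    have hδ0 : δ ≠ 0 := by
      have : IsUnit δ := (Matrix.isUnit_iff_isUnit_det _).1 g.isUnit
      exact this.ne_zero
    set p := mobiusAct g (x l) with hp
    have hYik : detRep (y i) (y k) = c (x i) * c (x k) * δ * detRep (x i) (x k) := by
      rw [← hgi, ← hgk]; exact hcs _ _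
    have hYjk : detRep (y j) (y k) = c (x j) * c (x k) * δ * detRep (x j) (x k) := by
      rw [← hgj, ← hgk]; exact hcs _ _
    have hDip : detRep (y i) p = c (x i) * c (x l) * δ * detRep (x i) (x l) := by
      rw [← hgi, hp]; exact hcs _ _
    have hDjp : detRep (y j) p = c (x j) * c (x l) * δ * detRep (x j) (x l) := by
      rw [← hgj, hp]; exact hcs _ _
    have hXik : detRep (x i) (x k) ≠ 0 := (detRep_ne_zero_iff _ _).2 hik
    have hXjk : detRep (x j) (x k) ≠ 0 := (detRep_ne_zero_iff _ _).2 hjk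
    have hfac : detRep (x i) (x k) * detRep (x j) (x k) * c (x k) * δ *
        (detRep (y j) p * detRep (y i) (y l) - detRep (y i) p * detRep (y j) (y l)) = 0 := by
      rw [hDip, hDjp, ]
      linear_combination (c (x l) * δ) * hcr i j k l -
        (c (x l) * δ * detRep (x i) (x k) * detRep (x j) (x l) * detRep (y i) (y l)) * hYjk +
        (c (x l) * δ * detRep (x i) (x l) * detRep (x j) (x k) * detRep (y j) (y l)) * hYik
    have hzero : detRep (y j) p * detRep (y i) (y l) - detRep (y i) p * detRep (y j) (y l) = 0 := by
      rcases mul_eq_zero.1 hfac with h | h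
      · rcases mul_eq_zero.1 h with h | h
        · rcases mul_eq_zero.1 h with h | h
          · rcases mul_eq_zero.1 h with h | h
            · exact absurd h hXik
            · exact absurd h hXjk
          · exact absurd h (hc0 _)
        · exact absurd h hδ0
      · exact h
    have hrel : detRep (y i) p * detRep (y j) (y l) = detRep (y j) p * detRep (y i) (y l) :=
      (sub_eq_zero.1 hzero).symm
    exact eq_of_detRep_rel hij' hrel
end

section
/- A phylogenetic tree with n leaves is determined by its collection of destination partitions: if two phylogenetic trees on the same labelled leaf set N have the same family of destination partitions (indexed by a bijection of their inner vertex sets), then they are isomorphic as labelled trees. -/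
open SimpleGraph

/-- The destination set of a vertex `v` of a tree towards a neighbour `w`:
leaves lying in the connected component of `w` after removing `v`. -/
def destSet {V : Type*} [Fintype V] (G : SimpleGraph V) [DecidableRel G.Adj]
    (v w : V) : Set V :=
  {l | G.degree l = 1 ∧ ∃ (hl : l ≠ v) (hw : w ≠ v),
    (G.induce {u : V | u ≠ v}).Reachable ⟨w, hw⟩ ⟨l, hl⟩}

/-- The destination partition of a vertex `v`, recorded as the family of subsets of
the label set `N` (pulled back along the leaf labelling `ℓ : N → V`) given by the
destination sets of `v` along its incident edges. -/
def destPartition {V N : Type*} [Fintype V] (G : SimpleGraph V) [DecidableRel G.Adj]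
    (ℓ : N → V) (v : V) : Set (Set N) :=
  {S | ∃ w, G.Adj v w ∧ S = ℓ ⁻¹' destSet G v w}

set_option linter.unusedSectionVars false
namespace TreeDet

open SimpleGraph Walk

variable {V : Type*} {G : SimpleGraph V}

lemma isPath_concat {u v w : V} {p : G.Walk u v} (hp : p.IsPath) (h : G.Adj v w)
    (hw : w ∉ p.support) : (p.concat h).IsPath := by
  rw [← Walk.isPath_reverse_iff, Walk.reverse_concat]
  exact Walk.IsPath.cons hp.reverse (by rwa [Walk.support_reverse, List.mem_reverse])

noncomputable def thePath (hT : G.IsTree) (u v : V) : G.Walk u v :=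
  (hT.existsUnique_path u v).exists.choose

lemma thePath_isPath (hT : G.IsTree) (u v : V) : (thePath hT u v).IsPath :=
  (hT.existsUnique_path u v).exists.choose_spec

lemma thePath_eq (hT : G.IsTree) {u v : V} {p : G.Walk u v} (hp : p.IsPath) :
    thePath hT u v = p :=
  (hT.existsUnique_path u v).unique (thePath_isPath hT u v) hp

/-- `Sec hT v w l` says that `w` is the first vertex on the path from `v` to `l`. -/
def Sec (hT : G.IsTree) (v w l : V) : Prop :=
  G.Adj v w ∧ v ∉ (thePath hT w l).support

variable {hT : G.IsTree}

lemma sec_self (hT : G.IsTree) {v w : V} (h : G.Adj v w) : Sec hT v w w := by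
  refine ⟨h, ?_⟩
  rw [thePath_eq hT (Walk.IsPath.nil)]
  simp [h.ne]

lemma sec_cons {v w l : V} (hs : Sec hT v w l) :
    thePath hT v l = Walk.cons hs.1 (thePath hT w l) :=
  thePath_eq hT ((thePath_isPath hT w l).cons hs.2)

lemma Sec.ne_src {v w l : V} (hs : Sec hT v w l) : v ≠ l := by
  intro h
  exact hs.2 (by rw [h]; exact Walk.end_mem_support _)

lemma sec_unique {v w w' l : V} (hs : Sec hT v w l) (hs' : Sec hT v w' l) : w = w' := by
  have h3 := congrArg Walk.support ((sec_cons hs).symm.trans (sec_cons hs'))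
  rw [Walk.support_cons, Walk.support_cons] at h3
  injection h3 with _ h4
  rw [Walk.support_eq_cons (thePath hT w l), Walk.support_eq_cons (thePath hT w' l)] at h4
  injection h4 with h5 _

lemma sec_exists (hT : G.IsTree) {v l : V} (hvl : v ≠ l) : ∃ w, Sec hT v w l := by
  obtain ⟨w, hadj, q, hq⟩ := Walk.exists_eq_cons_of_ne hvl (thePath hT v l)
  have hp := thePath_isPath hT v l
  rw [hq, Walk.cons_isPath_iff] at hp
  exact ⟨w, hadj, by rw [thePath_eq hT hp.1]; exact hp.2⟩

lemma sec_mem {v w l u : V} (hs : Sec hT v w l) (hu : u ∈ (thePath hT v l).support)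
    (huv : u ≠ v) : Sec hT v w u := by
  classical
  rw [sec_cons hs, Walk.support_cons] at hu
  have hu' : u ∈ (thePath hT w l).support := by
    rcases List.mem_cons.mp hu with h | h
    · exact absurd h huv
    · exact h
  refine ⟨hs.1, ?_⟩
  rw [thePath_eq hT ((thePath_isPath hT w l).takeUntil hu')]
  exact fun hv => hs.2 (Walk.support_takeUntil_subset _ hu' hv)

lemma mem_thePath_symm {u y z : V} (h : u ∈ (thePath hT y z).support) :
    u ∈ (thePath hT z y).support := by
  have he : thePath hT z y = (thePath hT y z).reverse :=
    thePath_eq hT (thePath_isPath hT y z).reverse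
  rw [he, Walk.support_reverse, List.mem_reverse]
  exact h

lemma notMem_support_of_mem {v u l : V} (hu : u ∈ (thePath hT v l).support) (huv : u ≠ v) :
    v ∉ (thePath hT u l).support := by
  classical
  have hp : (thePath hT v l).IsPath := thePath_isPath hT v l
  rw [thePath_eq hT (hp.dropUntil hu)]
  have hnd : ((thePath hT v l).support).Nodup := (Walk.isPath_def _).mp hp
  have hsplit : (thePath hT v l).support =
      ((thePath hT v l).takeUntil u hu).support ++
        (((thePath hT v l).dropUntil u hu).support).tail := by
    conv_lhs => rw [← Walk.take_spec (thePath hT v l) hu]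
    exact Walk.support_append _ _
  rw [hsplit] at hnd
  have hdisj := (List.nodup_append'.mp hnd).2.2
  intro hvdrop
  rw [Walk.support_eq_cons ((thePath hT v l).dropUntil u hu)] at hvdrop
  rcases List.mem_cons.mp hvdrop with h | h
  · exact huv h.symm
  · exact hdisj (Walk.start_mem_support _) h

lemma sec_step {x w y z : V} (hs : Sec hT x w y) (hyz : G.Adj y z) (hzx : z ≠ x) :
    Sec hT x w z := by
  classical
  by_cases hz : z ∈ (thePath hT x y).support
  · exact sec_mem hs hz hzx
  · have hq1 : ((thePath hT w y).concat hyz).IsPath := by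
      apply isPath_concat (thePath_isPath hT w y) hyz
      intro hzq
      exact hz (by rw [sec_cons hs, Walk.support_cons]; exact List.mem_cons_of_mem _ hzq)
    refine ⟨hs.1, ?_⟩
    rw [thePath_eq hT hq1]
    rw [Walk.support_concat]
    intro hx
    rcases List.mem_append.mp hx with h | h
    · exact hs.2 h
    · simp at h
      exact hzx h.symm

lemma sec_walk {x w : V} {y z : V} (p : G.Walk y z) (hp : ∀ t ∈ p.support, t ≠ x)
    (hs : Sec hT x w y) : Sec hT x w z := by
  induction p with
  | nil => exact hs
  | cons h q ih =>
    rename_i a b c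
    refine ih (fun t ht => hp t (by rw [Walk.support_cons]; exact List.mem_cons_of_mem _ ht)) ?_
    exact sec_step hs h
      (hp b (by rw [Walk.support_cons]; exact List.mem_cons_of_mem _ (Walk.start_mem_support q)))

lemma mem_of_sec_ne {x w w' y z : V} (hs : Sec hT x w y) (hs' : Sec hT x w' z)
    (hww' : w ≠ w') : x ∈ (thePath hT y z).support := by
  by_contra hx
  exact hww' (sec_unique (sec_walk (thePath hT y z) (fun t ht h => hx (by rw [← h]; exact ht)) hs) hs')

lemma sec_trans {v w z x : V} (hvw : G.Adj v w) (hs : Sec hT w z x) (hzv : z ≠ v)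
    (hxv : x ≠ v) : Sec hT v w x := by
  obtain ⟨c, hc⟩ := sec_exists hT (Ne.symm hxv)
  have hcw : c = w := by
    by_contra hcw
    have hb : v ∈ (thePath hT x w).support := mem_of_sec_ne hc (sec_self hT hvw) hcw
    have hb' : v ∈ (thePath hT w x).support := mem_thePath_symm hb
    have h2 : Sec hT w z v := sec_mem hs hb' hvw.ne
    exact hzv (sec_unique h2 (sec_self hT hvw.symm))
  exact hcw ▸ hc

section Fin

variable [Fintype V] [DecidableRel G.Adj]

lemma exists_leaf (hT : G.IsTree) (hdeg : ∀ u, G.degree u = 1 ∨ 3 ≤ G.degree u)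
    {v w : V} (hvw : G.Adj v w) : ∃ l, G.degree l = 1 ∧ Sec hT v w l := by
  classical
  set A : Finset V := Finset.univ.filter (fun x => Sec hT v w x) with hA
  have hne : A.Nonempty := ⟨w, by simp [hA, sec_self hT hvw]⟩
  obtain ⟨x, hxA, hmax⟩ := Finset.exists_max_image A (fun x => (thePath hT v x).length) hne
  have hsx : Sec hT v w x := by simpa [hA] using hxA
  rcases hdeg x with h1 | h3
  · exact ⟨x, h1, hsx⟩
  exfalso
  have hvx : v ≠ x := hsx.ne_src
  have hrev : thePath hT x v = (thePath hT v x).reverse :=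
    thePath_eq hT (thePath_isPath hT v x).reverse
  obtain ⟨z, hxz, r, hr⟩ := Walk.exists_eq_cons_of_ne (Ne.symm hvx) (thePath hT v x).reverse
  have hpr : (thePath hT v x).reverse.IsPath := (thePath_isPath hT v x).reverse
  rw [hr, Walk.cons_isPath_iff] at hpr
  have hszv : Sec hT x z v := ⟨hxz, by rw [thePath_eq hT hpr.1]; exact hpr.2⟩
  have hcard : 1 < (G.neighborFinset x).card := by
    rw [card_neighborFinset_eq_degree]; omega
  obtain ⟨y, hy, hyz⟩ := Finset.exists_mem_ne hcard z
  have hxy : G.Adj x y := (mem_neighborFinset _ _ _).mp hy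
  have hyp : y ∉ (thePath hT v x).support := by
    intro hyp
    have hy2 : y ∈ (thePath hT x v).support := by
      rw [hrev, Walk.support_reverse, List.mem_reverse]; exact hyp
    have h2 : Sec hT x z y := sec_mem hszv hy2 hxy.ne'
    exact hyz (sec_unique (sec_self hT hxy) h2)
  have hcat : ((thePath hT v x).concat hxy).IsPath :=
    isPath_concat (thePath_isPath hT v x) hxy hyp
  have hpy : thePath hT v y = (thePath hT v x).concat hxy := thePath_eq hT hcat
  have hsecy : Sec hT v w y :=
    sec_step hsx hxy (fun h => hyp (by rw [← h] at hvx ⊢; exact Walk.start_mem_support _))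
  have hmem : y ∈ A := by simp [hA, hsecy]
  have := hmax y hmem
  rw [hpy, Walk.length_concat] at this
  omega

lemma walk_of_induce {s : Set V} {a b : s} (q : (G.induce s).Walk a b) :
    ∃ p : G.Walk a b, ∀ x ∈ p.support, x ∈ s := by
  induction q with
  | nil => exact ⟨Walk.nil, by simp [Subtype.coe_prop]⟩
  | cons h q ih =>
    rename_i c d e
    obtain ⟨p, hp⟩ := ih
    have hadj : G.Adj c d := h
    refine ⟨Walk.cons hadj p, ?_⟩
    intro x hx
    rcases List.mem_cons.mp (by rwa [Walk.support_cons] at hx) with h' | h'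
    · rw [h']; exact c.2
    · exact hp x h'

lemma reachable_induce_of_walk {s : Set V} {a b : V} (p : G.Walk a b)
    (hp : ∀ x ∈ p.support, x ∈ s) (ha : a ∈ s) (hb : b ∈ s) :
    (G.induce s).Reachable ⟨a, ha⟩ ⟨b, hb⟩ := by
  induction p with
  | nil => rfl
  | cons h q ih =>
    rename_i c d e
    have hd : d ∈ s := hp d (by rw [Walk.support_cons]; exact List.mem_cons_of_mem _ (Walk.start_mem_support q))
    have step : (G.induce s).Adj ⟨c, ha⟩ ⟨d, hd⟩ := by
      simp only [comap_adj, Function.Embedding.coe_subtype]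
      exact h
    exact (step.reachable).trans
      (ih (fun x hx => hp x (by rw [Walk.support_cons]; exact List.mem_cons_of_mem _ hx)) hd hb)

lemma mem_destSet_iff (hT : G.IsTree) {v w : V} (hvw : G.Adj v w) (l : V) :
    l ∈ destSet G v w ↔ G.degree l = 1 ∧ Sec hT v w l := by
  classical
  constructor
  · rintro ⟨hl1, hl, hw, hreach⟩
    refine ⟨hl1, hvw, ?_⟩
    obtain ⟨q⟩ := hreach
    obtain ⟨p, hps⟩ := walk_of_induce q
    rw [thePath_eq hT (Walk.bypass_isPath p)]
    intro hv
    exact (hps v (Walk.support_bypass_subset p hv)) rfl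
  · rintro ⟨hl1, hsec⟩
    have hlv : l ≠ v := Ne.symm (Sec.ne_src ⟨hvw, hsec.2⟩)
    exact ⟨hl1, hlv, hvw.ne', reachable_induce_of_walk (s := {u : V | u ≠ v}) (thePath hT w l)
      (fun x hx hxv => hsec.2 (by rw [← hxv]; exact hx)) hvw.ne' hlv⟩

lemma leaf_adj_eq {l a b : V} (hl : G.degree l = 1) (h1 : G.Adj l a) (h2 : G.Adj l b) :
    a = b := by
  have hc : (G.neighborFinset l).card ≤ 1 := by rw [card_neighborFinset_eq_degree, hl]
  exact Finset.card_le_one.mp hc a ((mem_neighborFinset _ _ _).mpr h1)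
    b ((mem_neighborFinset _ _ _).mpr h2)

lemma destSet_leaf (hT : G.IsTree) {v w : V} (hw : G.degree w = 1) (hvw : G.Adj v w) :
    destSet G v w = {w} := by
  ext x
  rw [mem_destSet_iff hT hvw]
  constructor
  · rintro ⟨hx1, hsec⟩
    by_contra hxw
    have hwx : w ≠ x := fun h => hxw (by rw [← h]; rfl)
    obtain ⟨d, hwd, q, hq⟩ := Walk.exists_eq_cons_of_ne hwx (thePath hT w x)
    have hdv : d = v := leaf_adj_eq hw hwd hvw.symm
    apply hsec.2
    rw [hq, Walk.support_cons]
    exact List.mem_cons_of_mem _ (hdv ▸ Walk.start_mem_support q)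
  · rintro rfl
    exact ⟨hw, sec_self hT hvw⟩

lemma leaf_leaf_adj_iff (hT : G.IsTree) (hdeg : ∀ u, G.degree u = 1 ∨ 3 ≤ G.degree u)
    {a b : V} (ha : G.degree a = 1) (hb : G.degree b = 1) :
    G.Adj a b ↔ a ≠ b ∧ IsEmpty {v : V // 3 ≤ G.degree v} := by
  constructor
  · intro hab
    refine ⟨hab.ne, ⟨fun ⟨u, hu⟩ => ?_⟩⟩
    have claim : ∀ x : V, x = a ∨ x = b := by
      intro x
      by_contra hx
      push_neg at hx
      obtain ⟨c, hsec⟩ := sec_exists hT (Ne.symm hx.1)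
      have hc : c = b := leaf_adj_eq ha hsec.1 hab
      subst hc
      obtain ⟨d, hbd, q, hq⟩ := Walk.exists_eq_cons_of_ne (Ne.symm hx.2) (thePath hT c x)
      have hd : d = a := leaf_adj_eq hb hbd hab.symm
      apply hsec.2
      rw [hq, Walk.support_cons]
      exact List.mem_cons_of_mem _ (hd ▸ Walk.start_mem_support q)
    rcases claim u with rfl | rfl
    · omega
    · omega
  · rintro ⟨hab, hempty⟩
    have hall : ∀ u, G.degree u = 1 :=
      fun u => (hdeg u).resolve_right (fun h => hempty.false ⟨u, h⟩)
    obtain ⟨c, hsec⟩ := sec_exists hT hab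
    by_cases hcb : c = b
    · exact hcb ▸ hsec.1
    · exfalso
      obtain ⟨d, hcd, q, hq⟩ := Walk.exists_eq_cons_of_ne hcb (thePath hT c b)
      have hd : d = a := leaf_adj_eq (hall c) hcd hsec.1.symm
      apply hsec.2
      rw [hq, Walk.support_cons]
      exact List.mem_cons_of_mem _ (hd ▸ Walk.start_mem_support q)


lemma adj_of_destSet_eq_singleton (hT : G.IsTree) (hdeg : ∀ u, G.degree u = 1 ∨ 3 ≤ G.degree u)
    {b w l : V} (hb : G.degree b ≠ 1) (hvw : G.Adj b w) (hl : G.degree l = 1)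
    (hset : destSet G b w = {l}) : G.Adj b l := by
  classical
  rcases hdeg w with hw1 | hw3
  · have hmem : w ∈ destSet G b w := (mem_destSet_iff hT hvw w).mpr ⟨hw1, sec_self hT hvw⟩
    rw [hset] at hmem
    exact hmem ▸ hvw
  · exfalso
    have hx : ∀ z, z ≠ b → G.Adj w z → ∃ x, G.degree x = 1 ∧ Sec hT b w x ∧ Sec hT w z x := by
      intro z hzb hwz
      obtain ⟨x, hx1, hsx⟩ := exists_leaf hT hdeg hwz
      exact ⟨x, hx1, sec_trans hvw hsx hzb (fun h => hb (h ▸ hx1)), hsx⟩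
    have hbm : b ∈ G.neighborFinset w := (mem_neighborFinset _ _ _).mpr hvw.symm
    have hcard : 1 < ((G.neighborFinset w).erase b).card := by
      rw [Finset.card_erase_of_mem hbm, card_neighborFinset_eq_degree]; omega
    obtain ⟨z₁, hz₁, z₂, hz₂, hz12⟩ := Finset.one_lt_card.mp hcard
    rw [Finset.mem_erase, mem_neighborFinset] at hz₁ hz₂
    obtain ⟨x₁, hx₁1, hsb₁, hsw₁⟩ := hx z₁ hz₁.1 hz₁.2
    obtain ⟨x₂, hx₂1, hsb₂, hsw₂⟩ := hx z₂ hz₂.1 hz₂.2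
    have e₁ : x₁ = l := by
      have := (mem_destSet_iff hT hvw x₁).mpr ⟨hx₁1, hsb₁⟩
      rwa [hset] at this
    have e₂ : x₂ = l := by
      have := (mem_destSet_iff hT hvw x₂).mpr ⟨hx₂1, hsb₂⟩
      rwa [hset] at this
    rw [e₁] at hsw₁
    rw [e₂] at hsw₂
    exact hz12 (sec_unique hsw₁ hsw₂)

lemma sec_not_iff (hT : G.IsTree) {v u l : V} (hvu : G.Adj v u) (hlv : l ≠ v) :
    Sec hT u v l ↔ ¬ Sec hT v u l := by
  constructor
  · intro hs hs'
    apply hs.2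
    rw [sec_cons hs', Walk.support_cons]
    exact List.mem_cons_of_mem _ (Walk.start_mem_support _)
  · intro hns
    obtain ⟨c, hc⟩ := sec_exists hT (Ne.symm hlv)
    have hcu : c ≠ u := fun h => hns (h ▸ hc)
    have h1 : v ∈ (thePath hT l u).support := mem_of_sec_ne hc (sec_self hT hvu) hcu
    have h2 : v ∈ (thePath hT u l).support := mem_thePath_symm h1
    exact ⟨hvu.symm, notMem_support_of_mem h2 hvu.ne⟩

lemma sec_toward {v u pv qv x c : V} (hpv : Sec hT v pv u) (hqv : Sec hT u qv v)
    (huv : u ≠ v) (hsc : Sec hT v c x) (hcp : c ≠ pv) (hxu : x ≠ u) : Sec hT u qv x := by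
  have h1 : v ∈ (thePath hT x u).support := mem_of_sec_ne hsc hpv hcp
  have h2 : v ∈ (thePath hT u x).support := mem_thePath_symm h1
  obtain ⟨c', hc'⟩ := sec_exists hT (Ne.symm hxu)
  have h3 : Sec hT u c' v := sec_mem hc' h2 (Ne.symm huv)
  rw [← sec_unique h3 hqv]
  exact hc'

lemma subclaim (hT : G.IsTree) (hdeg : ∀ u, G.degree u = 1 ∨ 3 ≤ G.degree u)
    {v u w w' pv qv : V} (hv3 : 3 ≤ G.degree v) (hu1 : G.degree u ≠ 1)
    (hvw : G.Adj v w) (huw' : G.Adj u w')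
    (hiff : ∀ x, G.degree x = 1 → (Sec hT v w x ↔ ¬ Sec hT u w' x))
    (hpv : Sec hT v pv u) (hqv : Sec hT u qv v) (huv : u ≠ v) : w = pv := by
  classical
  by_contra hwp
  obtain ⟨a, ha1, hsa⟩ := exists_leaf hT hdeg hvw
  have hau : a ≠ u := fun h => hu1 (h ▸ ha1)
  have hqa : Sec hT u qv a := sec_toward hpv hqv huv hsa hwp hau
  have hqw' : qv ≠ w' := by
    intro h
    exact ((hiff a ha1).mp hsa) (h ▸ hqa)
  have hpvm : pv ∈ (G.neighborFinset v).erase w :=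
    Finset.mem_erase.mpr ⟨Ne.symm hwp, (mem_neighborFinset _ _ _).mpr hpv.1⟩
  have hwm : w ∈ G.neighborFinset v := (mem_neighborFinset _ _ _).mpr hvw
  have hcard : 0 < (((G.neighborFinset v).erase w).erase pv).card := by
    rw [Finset.card_erase_of_mem hpvm, Finset.card_erase_of_mem hwm,
      card_neighborFinset_eq_degree]
    omega
  obtain ⟨w₂, hw₂⟩ := Finset.card_pos.mp hcard
  rw [Finset.mem_erase, Finset.mem_erase, mem_neighborFinset] at hw₂
  obtain ⟨hw₂p, hw₂w, hvw₂⟩ := hw₂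
  obtain ⟨c, hc1, hsc⟩ := exists_leaf hT hdeg hvw₂
  have hcu : c ≠ u := fun h => hu1 (h ▸ hc1)
  have hqc : Sec hT u qv c := sec_toward hpv hqv huv hsc hw₂p hcu
  have hw'c : Sec hT u w' c := by
    by_contra h
    exact hw₂w (sec_unique hsc ((hiff c hc1).mpr h))
  exact hqw' (sec_unique hqc hw'c)

lemma adj_of_compl (hT : G.IsTree) (hdeg : ∀ u, G.degree u = 1 ∨ 3 ≤ G.degree u)
    {N : Type*} (ℓ : N ≃ {x : V // G.degree x = 1}) {v u w w' : V}
    (hv3 : 3 ≤ G.degree v) (hu3 : 3 ≤ G.degree u) (huv : u ≠ v)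
    (hvw : G.Adj v w) (huw' : G.Adj u w')
    (hS : ((fun i => (ℓ i : V)) ⁻¹' destSet G v w)ᶜ = (fun i => (ℓ i : V)) ⁻¹' destSet G u w') :
    G.Adj v u := by
  classical
  by_contra hadj
  have hv1 : G.degree v ≠ 1 := by omega
  have hu1 : G.degree u ≠ 1 := by omega
  have hiff : ∀ x, G.degree x = 1 → (Sec hT v w x ↔ ¬ Sec hT u w' x) := by
    intro x hx
    have h1 : (ℓ.symm ⟨x, hx⟩ ∈ (fun i => (ℓ i : V)) ⁻¹' destSet G v w) ↔ Sec hT v w x := by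
      simp only [Set.mem_preimage, Equiv.apply_symm_apply]
      rw [mem_destSet_iff hT hvw]
      simp [hx]
    have h2 : (ℓ.symm ⟨x, hx⟩ ∈ (fun i => (ℓ i : V)) ⁻¹' destSet G u w') ↔ Sec hT u w' x := by
      simp only [Set.mem_preimage, Equiv.apply_symm_apply]
      rw [mem_destSet_iff hT huw']
      simp [hx]
    rw [← h1, ← h2, ← hS]
    simp
  obtain ⟨pv, hpv⟩ := sec_exists hT (Ne.symm huv)
  obtain ⟨qv, hqv⟩ := sec_exists hT huv
  have hpvu : pv ≠ u := fun h => hadj (h ▸ hpv.1)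
  have hw : w = pv := subclaim hT hdeg hv3 hu1 hvw huw' hiff hpv hqv huv
  have hiff' : ∀ x, G.degree x = 1 → (Sec hT u w' x ↔ ¬ Sec hT v w x) := by
    intro x hx
    have := hiff x hx
    tauto
  have hw'q : w' = qv := subclaim hT hdeg hu3 hv1 huw' hvw hiff' hqv hpv (Ne.symm huv)
  obtain ⟨z, hz⟩ := sec_exists hT hpvu
  have hzv : z ≠ v := by
    intro h
    subst h
    apply hpv.2
    rw [sec_cons hz, Walk.support_cons]
    exact List.mem_cons_of_mem _ (Walk.start_mem_support _)
  have hdm : 3 ≤ G.degree pv := by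
    rcases hdeg pv with h1 | h3
    · exact absurd (leaf_adj_eq h1 hpv.1.symm hz.1).symm hzv
    · exact h3
  have hvm : v ∈ (G.neighborFinset pv).erase z :=
    Finset.mem_erase.mpr ⟨Ne.symm hzv, (mem_neighborFinset _ _ _).mpr hpv.1.symm⟩
  have hzm : z ∈ G.neighborFinset pv := (mem_neighborFinset _ _ _).mpr hz.1
  have hcard : 0 < (((G.neighborFinset pv).erase z).erase v).card := by
    rw [Finset.card_erase_of_mem hvm, Finset.card_erase_of_mem hzm,
      card_neighborFinset_eq_degree]
    omega
  obtain ⟨y, hy⟩ := Finset.card_pos.mp hcard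
  rw [Finset.mem_erase, Finset.mem_erase, mem_neighborFinset] at hy
  obtain ⟨hyv, hyz, hpy⟩ := hy
  obtain ⟨d, hd1, hsd⟩ := exists_leaf hT hdeg hpy
  have hdv : d ≠ v := fun h => hv1 (h ▸ hd1)
  have hdu : d ≠ u := fun h => hu1 (h ▸ hd1)
  have h1 : Sec hT v pv d := sec_trans hpv.1 hsd hyv hdv
  have h2 : pv ∈ (thePath hT d u).support := mem_of_sec_ne hsd hz hyz
  have h3 : pv ∈ (thePath hT u d).support := mem_thePath_symm h2
  obtain ⟨c', hc'⟩ := sec_exists hT (Ne.symm hdu)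
  have h4 : Sec hT u c' pv := sec_mem hc' h3 hpvu
  have h5 : pv ∈ (thePath hT u v).support := by
    apply mem_thePath_symm
    rw [sec_cons hpv, Walk.support_cons]
    exact List.mem_cons_of_mem _ (Walk.start_mem_support _)
  have h6 : Sec hT u qv pv := sec_mem hqv h5 hpvu
  have h7 : Sec hT u qv d := by
    rw [← sec_unique h4 h6]
    exact hc'
  rw [← hw] at h1
  rw [← hw'q] at h7
  exact ((hiff d hd1).mp h1) h7

lemma destSet_eq_of_preimage (hT : G.IsTree) {N : Type*} (ℓ : N ≃ {x : V // G.degree x = 1})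
    {b w : V} (hvw : G.Adj b w) {i : N}
    (hpre : (fun j => (ℓ j : V)) ⁻¹' destSet G b w = {i}) :
    destSet G b w = {(ℓ i : V)} := by
  ext x
  constructor
  · intro hx
    have hx1 : G.degree x = 1 := ((mem_destSet_iff hT hvw x).mp hx).1
    have hmem : ℓ.symm ⟨x, hx1⟩ ∈ (fun j => (ℓ j : V)) ⁻¹' destSet G b w := by
      simp only [Set.mem_preimage, Equiv.apply_symm_apply]
      exact hx
    rw [hpre] at hmem
    have := congrArg (fun j => (ℓ j : V)) hmem
    simp only [Equiv.apply_symm_apply] at this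
    exact this
  · intro hx
    have hi : i ∈ (fun j => (ℓ j : V)) ⁻¹' destSet G b w := by rw [hpre]; rfl
    rw [Set.mem_singleton_iff] at hx
    rw [hx]
    exact hi

lemma preimage_destSet_leaf (hT : G.IsTree) {N : Type*} (ℓ : N ≃ {x : V // G.degree x = 1})
    {b : V} (i : N) (hvw : G.Adj b (ℓ i : V)) :
    (fun j => (ℓ j : V)) ⁻¹' destSet G b (ℓ i : V) = {i} := by
  rw [destSet_leaf hT (ℓ i).2 hvw]
  ext j
  simp [Subtype.coe_inj]

end Fin


section Two

variable {V V' N : Type*} [Fintype V] [Fintype V']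
variable (G : SimpleGraph V) (G' : SimpleGraph V')
variable [DecidableRel G.Adj] [DecidableRel G'.Adj]

def theMap (hdeg : ∀ u, G.degree u = 1 ∨ 3 ≤ G.degree u)
    (ℓ : N ≃ {v : V // G.degree v = 1}) (ℓ' : N ≃ {v : V' // G'.degree v = 1})
    (φ : {v : V // 3 ≤ G.degree v} ≃ {v : V' // 3 ≤ G'.degree v}) (x : V) : V' :=
  if h : G.degree x = 1 then (ℓ' (ℓ.symm ⟨x, h⟩) : V')
  else (φ ⟨x, (hdeg x).resolve_left h⟩ : V')

lemma theMap_leftinv (hdeg : ∀ u, G.degree u = 1 ∨ 3 ≤ G.degree u)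
    (hdeg' : ∀ u, G'.degree u = 1 ∨ 3 ≤ G'.degree u)
    (ℓ : N ≃ {v : V // G.degree v = 1}) (ℓ' : N ≃ {v : V' // G'.degree v = 1})
    (φ : {v : V // 3 ≤ G.degree v} ≃ {v : V' // 3 ≤ G'.degree v}) (x : V) :
    theMap G' G hdeg' ℓ' ℓ φ.symm (theMap G G' hdeg ℓ ℓ' φ x) = x := by
  unfold theMap
  by_cases h : G.degree x = 1
  · rw [dif_pos h]
    have h' : G'.degree (ℓ' (ℓ.symm ⟨x, h⟩) : V') = 1 := (ℓ' (ℓ.symm ⟨x, h⟩)).2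
    rw [dif_pos h']
    simp
  · rw [dif_neg h]
    have h3 := (hdeg x).resolve_left h
    have h' : ¬ G'.degree (φ ⟨x, h3⟩ : V') = 1 := by have := (φ ⟨x, h3⟩).2; omega
    rw [dif_neg h']
    simp

lemma theMap_adj (hT : G.IsTree) (hT' : G'.IsTree)
    (hdeg : ∀ u, G.degree u = 1 ∨ 3 ≤ G.degree u)
    (hdeg' : ∀ u, G'.degree u = 1 ∨ 3 ≤ G'.degree u)
    (ℓ : N ≃ {v : V // G.degree v = 1}) (ℓ' : N ≃ {v : V' // G'.degree v = 1})
    (φ : {v : V // 3 ≤ G.degree v} ≃ {v : V' // 3 ≤ G'.degree v})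
    (hφ : ∀ v : {v : V // 3 ≤ G.degree v},
      destPartition G (fun i => (ℓ i : V)) (v : V) =
      destPartition G' (fun i => (ℓ' i : V')) (φ v : V'))
    {a b : V} (hab : G.Adj a b) :
    G'.Adj (theMap G G' hdeg ℓ ℓ' φ a) (theMap G G' hdeg ℓ ℓ' φ b) := by
  classical
  by_cases ha : G.degree a = 1 <;> by_cases hb : G.degree b = 1
  · -- leaf-leaf
    obtain ⟨hne, hemp⟩ := (leaf_leaf_adj_iff hT hdeg ha hb).mp hab
    haveI := hemp
    haveI hemp' : IsEmpty {v : V' // 3 ≤ G'.degree v} := Equiv.isEmpty φ.symm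
    unfold theMap
    rw [dif_pos ha, dif_pos hb]
    apply (leaf_leaf_adj_iff hT' hdeg' (ℓ' _).2 (ℓ' _).2).mpr
    refine ⟨?_, hemp'⟩
    intro h
    apply hne
    have h2 : ℓ.symm ⟨a, ha⟩ = ℓ.symm ⟨b, hb⟩ := ℓ'.injective (Subtype.coe_injective h)
    have h3 := congrArg (fun s => (ℓ s : V)) h2
    simpa using h3
  · -- a leaf, b inner
    have hb3 := (hdeg b).resolve_left hb
    have hia : (ℓ (ℓ.symm ⟨a, ha⟩) : V) = a := by simp
    have hadj' : G.Adj b (ℓ (ℓ.symm ⟨a, ha⟩) : V) := by rw [hia]; exact hab.symm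
    have hP : ({ℓ.symm ⟨a, ha⟩} : Set N) ∈ destPartition G (fun j => (ℓ j : V)) b :=
      ⟨(ℓ (ℓ.symm ⟨a, ha⟩) : V), hadj', (preimage_destSet_leaf hT ℓ _ hadj').symm⟩
    have hP' : ({ℓ.symm ⟨a, ha⟩} : Set N) ∈
        destPartition G' (fun j => (ℓ' j : V')) (φ ⟨b, hb3⟩ : V') := by
      rw [← hφ ⟨b, hb3⟩]; exact hP
    obtain ⟨w', hw', hset'⟩ := hP'
    have hD := destSet_eq_of_preimage hT' ℓ' hw' hset'.symm
    have hAdj : G'.Adj (φ ⟨b, hb3⟩ : V') (ℓ' (ℓ.symm ⟨a, ha⟩) : V') :=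
      adj_of_destSet_eq_singleton hT' hdeg' (by have := (φ ⟨b, hb3⟩).2; omega) hw'
        (ℓ' (ℓ.symm ⟨a, ha⟩)).2 hD
    unfold theMap
    rw [dif_pos ha, dif_neg hb]
    exact hAdj.symm
  · -- a inner, b leaf
    have ha3 := (hdeg a).resolve_left ha
    have hib : (ℓ (ℓ.symm ⟨b, hb⟩) : V) = b := by simp
    have hadj' : G.Adj a (ℓ (ℓ.symm ⟨b, hb⟩) : V) := by rw [hib]; exact hab
    have hP : ({ℓ.symm ⟨b, hb⟩} : Set N) ∈ destPartition G (fun j => (ℓ j : V)) a :=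
      ⟨(ℓ (ℓ.symm ⟨b, hb⟩) : V), hadj', (preimage_destSet_leaf hT ℓ _ hadj').symm⟩
    have hP' : ({ℓ.symm ⟨b, hb⟩} : Set N) ∈
        destPartition G' (fun j => (ℓ' j : V')) (φ ⟨a, ha3⟩ : V') := by
      rw [← hφ ⟨a, ha3⟩]; exact hP
    obtain ⟨w', hw', hset'⟩ := hP'
    have hD := destSet_eq_of_preimage hT' ℓ' hw' hset'.symm
    have hAdj : G'.Adj (φ ⟨a, ha3⟩ : V') (ℓ' (ℓ.symm ⟨b, hb⟩) : V') :=
      adj_of_destSet_eq_singleton hT' hdeg' (by have := (φ ⟨a, ha3⟩).2; omega) hw'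
        (ℓ' (ℓ.symm ⟨b, hb⟩)).2 hD
    unfold theMap
    rw [dif_neg ha, dif_pos hb]
    exact hAdj
  · -- both inner
    have ha3 := (hdeg a).resolve_left ha
    have hb3 := (hdeg b).resolve_left hb
    have hne : a ≠ b := hab.ne
    have hS : ((fun j => (ℓ j : V)) ⁻¹' destSet G a b)ᶜ =
        (fun j => (ℓ j : V)) ⁻¹' destSet G b a := by
      ext j
      have hl := (ℓ j).2
      have hla : (ℓ j : V) ≠ a := fun h => by rw [h] at hl; omega
      simp only [Set.mem_compl_iff, Set.mem_preimage]
      rw [mem_destSet_iff hT hab, mem_destSet_iff hT hab.symm]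
      simp [hl, sec_not_iff hT hab hla]
    have h1 : ((fun j => (ℓ j : V)) ⁻¹' destSet G a b) ∈
        destPartition G (fun j => (ℓ j : V)) a := ⟨b, hab, rfl⟩
    have h2 : ((fun j => (ℓ j : V)) ⁻¹' destSet G b a) ∈
        destPartition G (fun j => (ℓ j : V)) b := ⟨a, hab.symm, rfl⟩
    have h1' : ((fun j => (ℓ j : V)) ⁻¹' destSet G a b) ∈
        destPartition G' (fun j => (ℓ' j : V')) (φ ⟨a, ha3⟩ : V') := by
      rw [← hφ ⟨a, ha3⟩]; exact h1
    have h2' : ((fun j => (ℓ j : V)) ⁻¹' destSet G b a) ∈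
        destPartition G' (fun j => (ℓ' j : V')) (φ ⟨b, hb3⟩ : V') := by
      rw [← hφ ⟨b, hb3⟩]; exact h2
    obtain ⟨w1, hw1, he1⟩ := h1'
    obtain ⟨w2, hw2, he2⟩ := h2'
    have hSS : (((fun j => (ℓ' j : V')) ⁻¹' destSet G' (φ ⟨a, ha3⟩ : V') w1))ᶜ =
        (fun j => (ℓ' j : V')) ⁻¹' destSet G' (φ ⟨b, hb3⟩ : V') w2 := by
      rw [← he1, ← he2]; exact hS
    have hne' : (φ ⟨b, hb3⟩ : V') ≠ (φ ⟨a, ha3⟩ : V') := by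
      intro h
      have h2 := congrArg Subtype.val (φ.injective (Subtype.coe_injective h))
      exact hne h2.symm
    have hAdj := adj_of_compl hT' hdeg' ℓ' (φ ⟨a, ha3⟩).2 (φ ⟨b, hb3⟩).2 hne' hw1 hw2 hSS
    unfold theMap
    rw [dif_neg ha, dif_neg hb]
    exact hAdj

end Two

end TreeDet


/-- A phylogenetic tree with labelled leaf set `N` is determined by its family of
destination partitions: if two such trees have the same destination partitions
(indexed by a bijection `φ` of their inner vertex sets), then they are isomorphic
as labelled trees, i.e. by an isomorphism respecting the leaf labellings. -/
theorem tree_determined_by_destination_partitions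
    {V V' N : Type*} [Fintype V] [Fintype V']
    (G : SimpleGraph V) (G' : SimpleGraph V')
    [DecidableRel G.Adj] [DecidableRel G'.Adj]
    (hT : G.IsTree) (hT' : G'.IsTree)
    (hdeg : ∀ u, G.degree u = 1 ∨ 3 ≤ G.degree u)
    (hdeg' : ∀ u, G'.degree u = 1 ∨ 3 ≤ G'.degree u)
    (ℓ : N ≃ {v : V // G.degree v = 1}) (ℓ' : N ≃ {v : V' // G'.degree v = 1})
    (φ : {v : V // 3 ≤ G.degree v} ≃ {v : V' // 3 ≤ G'.degree v})
    (hφ : ∀ v : {v : V // 3 ≤ G.degree v},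
      destPartition G (fun i => (ℓ i : V)) (v : V) =
      destPartition G' (fun i => (ℓ' i : V')) (φ v : V')) :
    ∃ ψ : G ≃g G', ∀ i : N, ψ (ℓ i : V) = (ℓ' i : V') := by
  classical
  have hφ' : ∀ v' : {v : V' // 3 ≤ G'.degree v},
      destPartition G' (fun i => (ℓ' i : V')) (v' : V') =
      destPartition G (fun i => (ℓ i : V)) ((φ.symm v') : V) := by
    intro v'
    have h := (hφ (φ.symm v')).symm
    rwa [Equiv.apply_symm_apply] at h
  refine ⟨⟨⟨TreeDet.theMap G G' hdeg ℓ ℓ' φ, TreeDet.theMap G' G hdeg' ℓ' ℓ φ.symm,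
    TreeDet.theMap_leftinv G G' hdeg hdeg' ℓ ℓ' φ, ?rinv⟩, ?iff⟩, ?lab⟩
  case rinv =>
    intro y
    have h := TreeDet.theMap_leftinv G' G hdeg' hdeg ℓ' ℓ φ.symm y
    simpa using h
  case iff =>
    intro a b
    constructor
    · intro h
      simp only [Equiv.coe_fn_mk] at h
      have h2 := TreeDet.theMap_adj G' G hT' hT hdeg' hdeg ℓ' ℓ φ.symm hφ' h
      rwa [TreeDet.theMap_leftinv G G' hdeg hdeg' ℓ ℓ' φ a,
        TreeDet.theMap_leftinv G G' hdeg hdeg' ℓ ℓ' φ b] at h2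
    · intro h
      simp only [Equiv.coe_fn_mk]
      exact TreeDet.theMap_adj G G' hT hT' hdeg hdeg' ℓ ℓ' φ hφ h
  case lab =>
    intro i
    show TreeDet.theMap G G' hdeg ℓ ℓ' φ (ℓ i : V) = (ℓ' i : V')
    unfold TreeDet.theMap
    rw [dif_pos (ℓ i).2]
    simp
end
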